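/- (Proposition) Diag(Ω¹(A)) = Ω¹_Der(A): the image of the canonical map c: Ω¹(A) → A^{Hom^A_A(Ω¹(A),A)} is isomorphic as a bimodule to Ω¹_Der(A), the sub-bimodule of C¹(Der(A),A) generated by dA, and under this identification c corresponds to the surjection i_d: Ω¹(A) → Ω¹_Der(A) determined by the universal property of Ω¹(A). -/

import Mathlib

set_option maxHeartbeats 1000000
set_option synthInstance.maxHeartbeats 400000

open TensorProduct MulOpposite

section RightTensor
variable (R : Type*) [CommRing R] (S : Type*) [Ring S]
variable (M N : Type*) [AddCommGroup M] [AddCommGroup N] [Module R M] [Module R N]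
variable [Module S N] [SMulCommClass S R N]

noncomputable def rightFactorEnd : S →+* Module.End R (M ⊗[R] N) where
  toFun s := (Module.toModuleEnd R N s).lTensor M
  map_one' := by
    show (Module.toModuleEnd R N (1 : S)).lTensor M = 1
    rw [map_one]; exact LinearMap.lTensor_id M N
  map_mul' s t := by
    show (Module.toModuleEnd R N (s * t)).lTensor M = _
    rw [map_mul]; exact LinearMap.lTensor_mul M _ _
  map_zero' := by
    show (Module.toModuleEnd R N (0 : S)).lTensor M = 0
    rw [map_zero]; exact LinearMap.lTensor_zero M
  map_add' s t := by
    show (Module.toModuleEnd R N (s + t)).lTensor M = _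
    rw [map_add]; exact LinearMap.lTensor_add M _ _

noncomputable def rightFactorModule : Module S (M ⊗[R] N) :=
  Module.compHom _ (rightFactorEnd R S M N)

end RightTensor

section Bimodule

variable (K A : Type*) [CommRing K] [Ring A] [Algebra K A]

noncomputable def leftAct (M : Type*) [AddCommGroup M] [Module (A ⊗[K] Aᵐᵒᵖ) M] :
    Module A M :=
  Module.compHom M (Algebra.TensorProduct.includeLeftRingHom : A →+* A ⊗[K] Aᵐᵒᵖ)

noncomputable def rightAct (M : Type*) [AddCommGroup M] [Module (A ⊗[K] Aᵐᵒᵖ) M] :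
    Module Aᵐᵒᵖ M :=
  Module.compHom M ((Algebra.TensorProduct.includeRight : Aᵐᵒᵖ →ₐ[K] A ⊗[K] Aᵐᵒᵖ) : Aᵐᵒᵖ →+* A ⊗[K] Aᵐᵒᵖ)

variable (M N : Type*)
  [AddCommGroup M] [Module (A ⊗[K] Aᵐᵒᵖ) M] [Module K M] [IsScalarTower K (A ⊗[K] Aᵐᵒᵖ) M]
  [AddCommGroup N] [Module (A ⊗[K] Aᵐᵒᵖ) N] [Module K N] [IsScalarTower K (A ⊗[K] Aᵐᵒᵖ) N]

/-- The bimodule structure on `M ⊗[K] N` given by `a • (m ⊗ n) • b = (a • m) ⊗ (n • b)`. -/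
noncomputable def tensorBimoduleK : Module (A ⊗[K] Aᵐᵒᵖ) (M ⊗[K] N) :=
  letI mA : Module A M := leftAct K A M
  letI nOp : Module Aᵐᵒᵖ N := rightAct K A N
  haveI h1 : SMulCommClass K A M :=
    ⟨fun k a m => smul_comm k (a ⊗ₜ[K] (1 : Aᵐᵒᵖ)) m⟩
  haveI h2 : SMulCommClass Aᵐᵒᵖ K N :=
    ⟨fun b k n => (smul_comm k ((1 : A) ⊗ₜ[K] b) n).symm⟩
  letI mod_left : Module A (M ⊗[K] N) := TensorProduct.leftModule
  letI mod_right : Module Aᵐᵒᵖ (M ⊗[K] N) := rightFactorModule K Aᵐᵒᵖ M N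
  haveI tower_left : IsScalarTower K A (M ⊗[K] N) := ⟨fun k a x => by
    induction x using TensorProduct.induction_on with
    | zero => simp
    | tmul m n =>
        show ((k • a) • m) ⊗ₜ[K] n = k • ((a • m) ⊗ₜ[K] n)
        have h : ((k • a) • m : M) = k • (a • m) := by
          show ((k • a) ⊗ₜ[K] (1 : Aᵐᵒᵖ)) • m = k • ((a ⊗ₜ[K] (1 : Aᵐᵒᵖ)) • m)
          rw [← smul_assoc, smul_tmul']
        rw [h]
        exact (smul_tmul' k (a • m) n).symm
    | add x y hx hy => simp only [smul_add, hx, hy]⟩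
  haveI tower_right : IsScalarTower K Aᵐᵒᵖ (M ⊗[K] N) := ⟨fun k b x => by
    induction x using TensorProduct.induction_on with
    | zero => simp
    | tmul m n =>
        show m ⊗ₜ[K] ((k • b) • n) = k • (m ⊗ₜ[K] (b • n))
        have h : ((k • b) • n : N) = k • (b • n) := by
          show ((1 : A) ⊗ₜ[K] (k • b)) • n = k • (((1 : A) ⊗ₜ[K] b) • n)
          rw [show ((1 : A) ⊗ₜ[K] (k • b) : A ⊗[K] Aᵐᵒᵖ) = k • ((1 : A) ⊗ₜ[K] b) from
                tmul_smul k (1 : A) b,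
              smul_assoc]
        rw [h]
        exact tmul_smul (R := K) k m (b • n)
    | add x y hx hy => simp only [smul_add, hx, hy]⟩
  haveI comm : SMulCommClass A Aᵐᵒᵖ (M ⊗[K] N) := ⟨fun a b x => by
    induction x using TensorProduct.induction_on with
    | zero => simp
    | tmul m n =>
        show a • (m ⊗ₜ[K] (b • n)) = b • ((a • m) ⊗ₜ[K] n)
        rw [smul_tmul']
        rfl
    | add x y hx hy => simp only [smul_add, hx, hy]⟩
  TensorProduct.Algebra.module

end Bimodule

section Omega
variable (K A : Type*) [CommRing K] [Ring A] [Algebra K A]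

/-- `A` as a bimodule over itself. -/
noncomputable def bimoduleBA : Module (A ⊗[K] Aᵐᵒᵖ) A := TensorProduct.Algebra.module

attribute [local instance] bimoduleBA

theorem towerBA : IsScalarTower K (A ⊗[K] Aᵐᵒᵖ) A := ⟨fun k b a => by
  show TensorProduct.Algebra.moduleAux (k • b) a = k • TensorProduct.Algebra.moduleAux b a
  rw [map_smul]
  rfl⟩

/-- `A ⊗[K] A` as a bimodule, with `a • (x ⊗ y) • b = (a*x) ⊗ (y*b)`. -/
noncomputable def bimoduleAA : Module (A ⊗[K] Aᵐᵒᵖ) (A ⊗[K] A) :=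
  haveI := towerBA K A
  tensorBimoduleK K A A A

attribute [local instance] bimoduleAA

/-- The multiplication `A ⊗[K] A → A` as a bimodule homomorphism. -/
noncomputable def mulBimodHom : (A ⊗[K] A) →ₗ[A ⊗[K] Aᵐᵒᵖ] A where
  toFun := LinearMap.mul' K A
  map_add' := map_add _
  map_smul' b x := by
    show LinearMap.mul' K A (b • x) = b • LinearMap.mul' K A x
    induction b using TensorProduct.induction_on with
    | zero => first
      | simp
      | rw [zero_smul, zero_smul, map_zero]
      | exact (congrArg (LinearMap.mul' K A) (zero_smul (A ⊗[K] Aᵐᵒᵖ) x)).trans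
          ((map_zero _).trans (zero_smul (A ⊗[K] Aᵐᵒᵖ) (LinearMap.mul' K A x)).symm)
      | erw [zero_smul, zero_smul, map_zero]
    | tmul a0 b0 =>
        induction x using TensorProduct.induction_on with
        | zero => simp
        | tmul x1 y1 =>
            show LinearMap.mul' K A ((a0 ⊗ₜ[K] b0 : A ⊗[K] Aᵐᵒᵖ) • (x1 ⊗ₜ[K] y1))
              = (a0 ⊗ₜ[K] b0 : A ⊗[K] Aᵐᵒᵖ) • (LinearMap.mul' K A (x1 ⊗ₜ[K] y1))
            have h1 : ((a0 ⊗ₜ[K] b0 : A ⊗[K] Aᵐᵒᵖ) • (x1 ⊗ₜ[K] y1) : A ⊗[K] A)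
                = (a0 * (x1 * 1)) ⊗ₜ[K] (1 * (y1 * unop b0)) := rfl
            have h2 : ((a0 ⊗ₜ[K] b0 : A ⊗[K] Aᵐᵒᵖ) • (x1 * y1) : A)
                = a0 * (x1 * y1 * unop b0) := rfl
            rw [LinearMap.mul'_apply, h1, h2, LinearMap.mul'_apply]
            noncomm_ring
        | add x y hx hy =>
            rw [smul_add, map_add, map_add, hx, hy, smul_add]
    | add b c hb hc =>
        rw [add_smul, map_add, hb, hc, add_smul]

/-- `Ω¹(A)`: the kernel of the multiplication, as a sub-bimodule of `A ⊗[K] A`. -/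
noncomputable def Omega1 : Submodule (A ⊗[K] Aᵐᵒᵖ) (A ⊗[K] A) :=
  LinearMap.ker (mulBimodHom K A)

/-- `Ω¹(A)` as a type, with its bimodule structure. -/
def OmegaTy : Type _ := ↥(Omega1 K A)

noncomputable instance : AddCommGroup (OmegaTy K A) :=
  inferInstanceAs (AddCommGroup ↥(Omega1 K A))

noncomputable instance : Module (A ⊗[K] Aᵐᵒᵖ) (OmegaTy K A) :=
  inferInstanceAs (Module (A ⊗[K] Aᵐᵒᵖ) ↥(Omega1 K A))

/-- The universal derivation `d : A → Ω¹(A)`, `d a = 1 ⊗ a - a ⊗ 1`. -/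
noncomputable def dOmega (a : A) : OmegaTy K A :=
  (⟨(1 : A) ⊗ₜ[K] a - a ⊗ₜ[K] (1 : A), by
    simp [Omega1, LinearMap.mem_ker, mulBimodHom]⟩ : ↥(Omega1 K A))

end Omega

section Der
variable (K A : Type*) [CommRing K] [Ring A] [Algebra K A]

/-- `Der(A)`: the `K`-module of derivations of `A` into itself. -/
def derSub : Submodule K (A →ₗ[K] A) where
  carrier := {f : A →ₗ[K] A | ∀ a b : A, f (a * b) = a * f b + f a * b}
  add_mem' := by
    intro f g hf hg a b
    simp only [LinearMap.add_apply, hf a b, hg a b, mul_add, add_mul]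
    abel
  zero_mem' := by intro a b; simp
  smul_mem' := by
    intro k f hf a b
    simp only [LinearMap.smul_apply, hf a b, smul_add, Algebra.mul_smul_comm,
      Algebra.smul_mul_assoc]

/-- The map `d : A → C¹(Der(A), A)`, `(d a) δ = δ a`. -/
def dDer (a : A) : (derSub K A) →ₗ[K] A where
  toFun δ := (δ : A →ₗ[K] A) a
  map_add' δ ε := by simp
  map_smul' k δ := by simp

/-- The bimodule structure on `C¹(Der(A), A)`, `(a • f • b) δ = a * f δ * b`. -/
noncomputable def bimoduleC1 : Module (A ⊗[K] Aᵐᵒᵖ) ((derSub K A) →ₗ[K] A) :=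
  haveI h1 : SMulCommClass A Aᵐᵒᵖ ((derSub K A) →ₗ[K] A) :=
    ⟨fun a b f => LinearMap.ext fun x => smul_comm a b (f x)⟩
  haveI h2 : IsScalarTower K A ((derSub K A) →ₗ[K] A) :=
    ⟨fun k a f => LinearMap.ext fun x => smul_assoc k a (f x)⟩
  haveI h3 : IsScalarTower K Aᵐᵒᵖ ((derSub K A) →ₗ[K] A) :=
    ⟨fun k b f => LinearMap.ext fun x => smul_assoc k b (f x)⟩
  TensorProduct.Algebra.module

attribute [local instance] bimoduleC1

/-- `Ω¹_Der(A)`: the sub-bimodule of `C¹(Der(A), A)` generated by `dA`. -/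
noncomputable def omegaDer : Submodule (A ⊗[K] Aᵐᵒᵖ) ((derSub K A) →ₗ[K] A) :=
  Submodule.span _ (Set.range (dDer K A))

end Der




section AuxC
variable (K A : Type*) [CommRing K] [Ring A] [Algebra K A]

attribute [local instance] bimoduleBA bimoduleAA bimoduleC1

theorem der_apply_one (δ : derSub K A) : (δ : A →ₗ[K] A) 1 = 0 := by
  have h := δ.2 1 1
  rw [one_mul, one_mul, mul_one] at h
  exact left_eq_add.mp h

/-- The auxiliary map `A ⊗ A → C¹(Der A, A)`, `x ⊗ y ↦ (δ ↦ x * δ y)`. -/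
noncomputable def phiMap : (A ⊗[K] A) →ₗ[K] ((derSub K A) →ₗ[K] A) :=
  TensorProduct.lift (LinearMap.mk₂ K
    (fun x y => { toFun := fun δ : derSub K A => x * (δ : A →ₗ[K] A) y
                  map_add' := fun δ ε => by
                    simp [Submodule.coe_add, LinearMap.add_apply, mul_add]
                  map_smul' := fun k δ => by
                    simp [Algebra.mul_smul_comm] })
    (fun x1 x2 y => by ext δ; simp [add_mul])
    (fun k x y => by ext δ; simp [Algebra.smul_mul_assoc])
    (fun x y1 y2 => by ext δ; simp [mul_add])
    (fun k x y => by ext δ; simp [Algebra.mul_smul_comm]))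

@[simp] theorem phiMap_tmul (x y : A) (δ : derSub K A) :
    phiMap K A (x ⊗ₜ[K] y) δ = x * (δ : A →ₗ[K] A) y := rfl

theorem smulAA_tmul (a0 : A) (b0 : Aᵐᵒᵖ) (x y : A) :
    ((a0 ⊗ₜ[K] b0 : A ⊗[K] Aᵐᵒᵖ) • (x ⊗ₜ[K] y) : A ⊗[K] A)
      = (a0 * (x * 1)) ⊗ₜ[K] (1 * (y * unop b0)) := rfl

theorem smulC1_apply (a0 : A) (b0 : Aᵐᵒᵖ) (f : (derSub K A) →ₗ[K] A) (δ : derSub K A) :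
    ((a0 ⊗ₜ[K] b0 : A ⊗[K] Aᵐᵒᵖ) • f) δ = a0 * (f δ * unop b0) := rfl

theorem smulBA (a0 : A) (b0 : Aᵐᵒᵖ) (m : A) :
    ((a0 ⊗ₜ[K] b0 : A ⊗[K] Aᵐᵒᵖ) • m : A) = a0 * (m * unop b0) := rfl

theorem phiMap_smul (a0 : A) (b0 : Aᵐᵒᵖ) (z : A ⊗[K] A) (δ : derSub K A) :
    phiMap K A ((a0 ⊗ₜ[K] b0 : A ⊗[K] Aᵐᵒᵖ) • z) δ
      = a0 * (phiMap K A z δ * unop b0)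
        + a0 * (LinearMap.mul' K A z * (δ : A →ₗ[K] A) (unop b0)) := by
  induction z using TensorProduct.induction_on with
  | zero => simp
  | tmul x y =>
      rw [smulAA_tmul, phiMap_tmul, phiMap_tmul, LinearMap.mul'_apply]
      simp only [mul_one, one_mul]
      rw [δ.2 y (unop b0)]
      noncomm_ring
  | add z w hz hw =>
      rw [smul_add]
      simp only [map_add, LinearMap.add_apply]
      rw [hz, hw]
      noncomm_ring

/-- Evaluation at a derivation, as a bimodule map `C¹(Der A, A) → A`. -/
noncomputable def evalAt (δ : derSub K A) :
    ((derSub K A) →ₗ[K] A) →ₗ[A ⊗[K] Aᵐᵒᵖ] A where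
  toFun f := f δ
  map_add' f g := rfl
  map_smul' b f := by
    simp only [RingHom.id_apply]
    induction b using TensorProduct.induction_on with
    | zero => exact (congrArg (fun g : (derSub K A) →ₗ[K] A => g δ) (zero_smul (A ⊗[K] Aᵐᵒᵖ) f)).trans (zero_smul (A ⊗[K] Aᵐᵒᵖ) (f δ)).symm
    | tmul a0 b0 => rw [smulC1_apply, smulBA]
    | add b c hb hc => rw [add_smul, add_smul, LinearMap.add_apply, hb, hc]

/-- The canonical map `i_d : Ω¹(A) → C¹(Der A, A)` as a bimodule map. -/
noncomputable def iDMap : (OmegaTy K A) →ₗ[A ⊗[K] Aᵐᵒᵖ] ((derSub K A) →ₗ[K] A) where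
  toFun x := phiMap K A x.1
  map_add' x y := map_add _ _ _
  map_smul' b x := by
    simp only [RingHom.id_apply]
    induction b using TensorProduct.induction_on with
    | zero => exact (congrArg (fun y : OmegaTy K A => phiMap K A y.1) (zero_smul (A ⊗[K] Aᵐᵒᵖ) x)).trans ((map_zero (phiMap K A)).trans (zero_smul (A ⊗[K] Aᵐᵒᵖ) (phiMap K A x.1)).symm)
    | tmul a0 b0 =>
        refine LinearMap.ext fun δ => ?_
        have hx : LinearMap.mul' K A x.1 = 0 := x.2
        have h : ((a0 ⊗ₜ[K] b0 : A ⊗[K] Aᵐᵒᵖ) • x : OmegaTy K A).1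
            = (a0 ⊗ₜ[K] b0 : A ⊗[K] Aᵐᵒᵖ) • x.1 := rfl
        rw [smulC1_apply]
        show phiMap K A ((a0 ⊗ₜ[K] b0 : A ⊗[K] Aᵐᵒᵖ) • x : OmegaTy K A).1 δ = _
        rw [h, phiMap_smul, hx, zero_mul, mul_zero, add_zero]
    | add b c hb hc =>
        rw [add_smul]
        show phiMap K A ((b • x).1 + (c • x).1) = _
        rw [map_add, hb, hc, add_smul]

theorem iDMap_dOmega (a : A) : iDMap K A (dOmega K A a) = dDer K A a := by
  refine LinearMap.ext fun δ => ?_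
  show phiMap K A ((1 : A) ⊗ₜ[K] a - a ⊗ₜ[K] (1 : A)) δ = (δ : A →ₗ[K] A) a
  rw [map_sub, LinearMap.sub_apply, phiMap_tmul, phiMap_tmul, der_apply_one,
    one_mul, mul_zero, sub_zero]

theorem range_iDMap : LinearMap.range (iDMap K A) = omegaDer K A := by
  apply le_antisymm
  · rintro _ ⟨x, rfl⟩
    show phiMap K A x.1 ∈ omegaDer K A
    induction x.1 using TensorProduct.induction_on with
    | zero => simp only [map_zero]; exact zero_mem _
    | tmul x y =>
        have h : phiMap K A (x ⊗ₜ[K] y)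
            = (x ⊗ₜ[K] (1 : Aᵐᵒᵖ) : A ⊗[K] Aᵐᵒᵖ) • dDer K A y := by
          refine LinearMap.ext fun δ => ?_
          rw [phiMap_tmul, smulC1_apply]
          show x * (δ : A →ₗ[K] A) y = x * ((δ : A →ₗ[K] A) y * 1)
          rw [mul_one]
        rw [h]
        exact Submodule.smul_mem _ _ (Submodule.subset_span ⟨y, rfl⟩)
    | add z w hz hw => rw [map_add]; exact add_mem hz hw
  · rw [omegaDer, Submodule.span_le]
    rintro _ ⟨a, rfl⟩
    exact ⟨dOmega K A a, iDMap_dOmega K A a⟩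

/-- Correction map: `z ↦ z - m(z) ⊗ 1` lands in `Ω¹(A)`. -/
theorem mem_Omega1_corr (z : A ⊗[K] A) :
    z - (LinearMap.mul' K A z) ⊗ₜ[K] (1 : A) ∈ Omega1 K A := by
  rw [Omega1, LinearMap.mem_ker]
  show LinearMap.mul' K A (z - (LinearMap.mul' K A z) ⊗ₜ[K] (1 : A)) = 0
  rw [map_sub, LinearMap.mul'_apply, mul_one, sub_self]

theorem dOmega_mul (a b : A) :
    dOmega K A (a * b)
      = (a ⊗ₜ[K] (1 : Aᵐᵒᵖ) : A ⊗[K] Aᵐᵒᵖ) • dOmega K A b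
        + ((1 : A) ⊗ₜ[K] (op b) : A ⊗[K] Aᵐᵒᵖ) • dOmega K A a := by
  apply Subtype.ext
  show (1 : A) ⊗ₜ[K] (a * b) - (a * b) ⊗ₜ[K] (1 : A)
      = (a ⊗ₜ[K] (1 : Aᵐᵒᵖ) : A ⊗[K] Aᵐᵒᵖ) • ((1 : A) ⊗ₜ[K] b - b ⊗ₜ[K] (1 : A))
        + ((1 : A) ⊗ₜ[K] (op b) : A ⊗[K] Aᵐᵒᵖ) • ((1 : A) ⊗ₜ[K] a - a ⊗ₜ[K] (1 : A))
  rw [smul_sub, smul_sub, smulAA_tmul, smulAA_tmul, smulAA_tmul, smulAA_tmul]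
  simp only [mul_one, one_mul, unop_one, unop_op]
  abel

end AuxC


section Statement
variable (K A : Type*) [CommRing K] [Ring A] [Algebra K A]

attribute [local instance] bimoduleBA bimoduleAA bimoduleC1

variable (M : Type*) [AddCommGroup M] [Module (A ⊗[K] Aᵐᵒᵖ) M]

/-- The canonical bimodule homomorphism `c : M → A^{Hom(M,A)}`, `c m = (ω m)_ω`. -/
noncomputable def cMap : M →ₗ[A ⊗[K] Aᵐᵒᵖ] ((M →ₗ[A ⊗[K] Aᵐᵒᵖ] A) → A) :=
  LinearMap.pi fun ω => ω

/-- `Diag(M)`: the image of the canonical map `c : M → A^{Hom(M,A)}`. -/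
noncomputable def diagSub : Submodule (A ⊗[K] Aᵐᵒᵖ) ((M →ₗ[A ⊗[K] Aᵐᵒᵖ] A) → A) :=
  LinearMap.range (cMap K A M)

theorem ker_cMap_eq_ker_iDMap :
    LinearMap.ker (cMap K A (OmegaTy K A)) = LinearMap.ker (iDMap K A) := by
  apply le_antisymm
  · intro x hx
    rw [LinearMap.mem_ker] at hx ⊢
    refine LinearMap.ext fun δ => ?_
    have h := congrFun hx ((evalAt K A δ).comp (iDMap K A))
    exact h
  · intro x hx
    rw [LinearMap.mem_ker] at hx ⊢
    funext ω
    show ω x = 0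
    -- the derivation associated to ω
    have hadd : ∀ a b : A, dOmega K A (a + b) = dOmega K A a + dOmega K A b := by
      intro a b
      apply Subtype.ext
      show (1 : A) ⊗ₜ[K] (a + b) - (a + b) ⊗ₜ[K] (1 : A)
          = ((1 : A) ⊗ₜ[K] a - a ⊗ₜ[K] (1 : A)) + ((1 : A) ⊗ₜ[K] b - b ⊗ₜ[K] (1 : A))
      rw [tmul_add, add_tmul]
      abel
    have hsmul : ∀ (k : K) (a : A),
        dOmega K A (k • a)
          = (algebraMap K (A ⊗[K] Aᵐᵒᵖ) k) • dOmega K A a := by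
      intro k a
      apply Subtype.ext
      show (1 : A) ⊗ₜ[K] (k • a) - (k • a) ⊗ₜ[K] (1 : A)
          = (algebraMap K (A ⊗[K] Aᵐᵒᵖ) k) • ((1 : A) ⊗ₜ[K] a - a ⊗ₜ[K] (1 : A))
      have halg : (algebraMap K (A ⊗[K] Aᵐᵒᵖ) k)
          = (algebraMap K A k) ⊗ₜ[K] (1 : Aᵐᵒᵖ) := by
        rw [Algebra.TensorProduct.algebraMap_apply]
      rw [halg, smul_sub, smulAA_tmul, smulAA_tmul]
      simp only [mul_one, one_mul, unop_one]
      have h1 : (k • (1 : A)) ⊗ₜ[K] a = (1 : A) ⊗ₜ[K] (k • a) := smul_tmul k 1 a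
      rw [Algebra.algebraMap_eq_smul_one]
      simp only [smul_mul_assoc, one_mul]
      rw [h1]
    have hBsmul : ∀ (k : K) (m : A), (algebraMap K (A ⊗[K] Aᵐᵒᵖ) k) • m = k • m := by
      intro k m
      have halg : (algebraMap K (A ⊗[K] Aᵐᵒᵖ) k)
          = (algebraMap K A k) ⊗ₜ[K] (1 : Aᵐᵒᵖ) := by
        rw [Algebra.TensorProduct.algebraMap_apply]
      rw [halg, smulBA, unop_one, mul_one, ← Algebra.smul_def]
    have hder : ∀ a b : A,
        ω (dOmega K A (a * b)) = a * ω (dOmega K A b) + ω (dOmega K A a) * b := by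
      intro a b
      rw [dOmega_mul, map_add, map_smul, map_smul, smulBA, smulBA]
      simp only [mul_one, one_mul, unop_op, unop_one]
    set δω : derSub K A :=
      (⟨{ toFun := fun a => ω (dOmega K A a)
          map_add' := fun a b => by
            show ω (dOmega K A (a + b)) = ω (dOmega K A a) + ω (dOmega K A b)
            rw [hadd, map_add]
          map_smul' := fun k a => by
            show ω (dOmega K A (k • a)) = k • ω (dOmega K A a)
            rw [hsmul, map_smul, hBsmul] }, fun a b => hder a b⟩ : derSub K A) with hδω
    have key : ∀ z : A ⊗[K] A,
        phiMap K A z δω = ω ⟨z - (LinearMap.mul' K A z) ⊗ₜ[K] (1 : A), mem_Omega1_corr K A z⟩ := by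
      intro z
      induction z using TensorProduct.induction_on with
      | zero =>
          have h0 : (⟨(0 : A ⊗[K] A) - (LinearMap.mul' K A 0) ⊗ₜ[K] (1 : A),
              mem_Omega1_corr K A 0⟩ : OmegaTy K A) = 0 := by
            apply Subtype.ext; simp
          rw [h0, map_zero]
          exact (map_zero ω).symm
      | tmul x y =>
          have h1 : (⟨x ⊗ₜ[K] y - (LinearMap.mul' K A (x ⊗ₜ[K] y)) ⊗ₜ[K] (1 : A),
              mem_Omega1_corr K A _⟩ : OmegaTy K A)
              = (x ⊗ₜ[K] (1 : Aᵐᵒᵖ) : A ⊗[K] Aᵐᵒᵖ) • dOmega K A y := by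
            apply Subtype.ext
            show x ⊗ₜ[K] y - (LinearMap.mul' K A (x ⊗ₜ[K] y)) ⊗ₜ[K] (1 : A)
                = (x ⊗ₜ[K] (1 : Aᵐᵒᵖ) : A ⊗[K] Aᵐᵒᵖ) • ((1 : A) ⊗ₜ[K] y - y ⊗ₜ[K] (1 : A))
            rw [smul_sub, smulAA_tmul, smulAA_tmul, LinearMap.mul'_apply]
            simp only [mul_one, one_mul, unop_one]
          rw [h1, map_smul, smulBA, unop_one, mul_one, phiMap_tmul]
          rfl
      | add z w hz hw =>
          have h2 : (⟨z + w - (LinearMap.mul' K A (z + w)) ⊗ₜ[K] (1 : A),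
              mem_Omega1_corr K A _⟩ : OmegaTy K A)
              = (⟨z - (LinearMap.mul' K A z) ⊗ₜ[K] (1 : A), mem_Omega1_corr K A z⟩ : OmegaTy K A)
                + (⟨w - (LinearMap.mul' K A w) ⊗ₜ[K] (1 : A), mem_Omega1_corr K A w⟩ : OmegaTy K A) := by
            apply Subtype.ext
            show z + w - (LinearMap.mul' K A (z + w)) ⊗ₜ[K] (1 : A)
                = (z - (LinearMap.mul' K A z) ⊗ₜ[K] (1 : A))
                  + (w - (LinearMap.mul' K A w) ⊗ₜ[K] (1 : A))
            rw [map_add, add_tmul]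
            abel
          rw [map_add, LinearMap.add_apply, hz, hw, h2]
          exact (map_add ω _ _).symm
    have hx0 : (⟨x.1 - (LinearMap.mul' K A x.1) ⊗ₜ[K] (1 : A),
        mem_Omega1_corr K A x.1⟩ : OmegaTy K A) = x := by
      apply Subtype.ext
      show x.1 - (LinearMap.mul' K A x.1) ⊗ₜ[K] (1 : A) = x.1
      have hm : LinearMap.mul' K A x.1 = 0 := x.2
      rw [hm, zero_tmul, sub_zero]
    have := key x.1
    rw [hx0] at this
    rw [← this]
    show (iDMap K A x) δω = 0
    rw [hx]
    rfl

/-- Proposition: `Diag(Ω¹(A)) = Ω¹_Der(A)`: the image of the canonical map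
`c : Ω¹(A) → A^{Hom(Ω¹(A),A)}` is isomorphic as a bimodule to `Ω¹_Der(A)`, the
sub-bimodule of `C¹(Der(A),A)` generated by `dA`; the identification sends
`c (d a)` to `d a ∈ Ω¹_Der(A)` for all `a ∈ A` (and is hence induced by the canonical
surjection `i_d : Ω¹(A) → Ω¹_Der(A)` determined by the universal property of `Ω¹(A)`). -/
theorem diag_omega1_eq_omegaDer :
    ∃ e : (diagSub K A (OmegaTy K A)) ≃ₗ[A ⊗[K] Aᵐᵒᵖ] (omegaDer K A),
      ∀ a : A,
        e ((cMap K A (OmegaTy K A)).rangeRestrict (dOmega K A a))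
          = ⟨dDer K A a, Submodule.subset_span (Set.mem_range_self a)⟩ := by
  refine ⟨(((cMap K A (OmegaTy K A)).quotKerEquivRange).symm.trans
      ((Submodule.quotEquivOfEq _ _ (ker_cMap_eq_ker_iDMap K A)).trans
        ((iDMap K A).quotKerEquivRange.trans
          (LinearEquiv.ofEq _ _ (range_iDMap K A))))), ?_⟩
  intro a
  have h1 : (cMap K A (OmegaTy K A)).rangeRestrict (dOmega K A a)
      = (cMap K A (OmegaTy K A)).quotKerEquivRange (Submodule.Quotient.mk (dOmega K A a)) := by
    apply Subtype.ext
    rw [LinearMap.quotKerEquivRange_apply_mk]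
    rfl
  rw [h1]
  erw [LinearEquiv.trans_apply, LinearEquiv.trans_apply, LinearEquiv.trans_apply]
  have h2 := LinearEquiv.symm_apply_apply ((cMap K A (OmegaTy K A)).quotKerEquivRange)
    (Submodule.Quotient.mk (dOmega K A a))
  erw [h2, Submodule.quotEquivOfEq_mk]
  apply Subtype.ext
  rw [LinearEquiv.coe_ofEq_apply, LinearMap.quotKerEquivRange_apply_mk]
  exact iDMap_dOmega K A a


end Statement
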